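/- Let r ≥ 1 and let ρ ∈ ℝ^r satisfy 0 < ρᵀρ < 1. Define the (r+1)×(r+1) symmetric block matrix L with blocks L₁₁ = ½ log(1 − ρᵀρ) (scalar), L₁₂ = (artanh(√(ρᵀρ))/√(ρᵀρ)) ρᵀ, L₂₁ = L₁₂ᵀ, and L₂₂ = (log(1 − ρᵀρ)/(2 ρᵀρ)) ρρᵀ. Then the matrix exponential of L equals C* = [[1, ρᵀ],[ρ, I_r]]; that is, L is the matrix logarithm of the correlation matrix C*. -/

import Mathlib

open Matrix

/-- Inverse hyperbolic tangent (Fisher transformation). -/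
noncomputable def artanh (x : ℝ) : ℝ := Real.log ((1 + x) / (1 - x)) / 2

set_option maxHeartbeats 1000000 in
open NormedSpace in
/-- `exp` of a real multiple of an idempotent. -/
lemma exp_smul_idem' {𝔸 : Type*} [NormedRing 𝔸] [NormedAlgebra ℝ 𝔸] [CompleteSpace 𝔸]
    (p : 𝔸) (hp : p * p = p) (a : ℝ) :
    exp (a • p) = 1 + (Real.exp a - 1) • p := by
  have hpn : ∀ n : ℕ, p ^ (n + 1) = p := by
    intro n; induction n with
    | zero => simp
    | succ k ih => rw [pow_succ, ih, hp]
  have hsum := expSeries_summable' (𝕂 := ℝ) (a • p)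
  have hc : Summable (fun n : ℕ => (((n.factorial : ℝ))⁻¹) * a ^ n) := by
    simpa [smul_eq_mul] using expSeries_summable' (𝕂 := ℝ) a
  have hc' : Summable (fun n : ℕ => ((((n+1).factorial : ℝ))⁻¹) * a ^ (n+1)) :=
    (summable_nat_add_iff 1).mpr hc
  have hea : Real.exp a = 1 + ∑' n : ℕ, ((((n+1).factorial : ℝ))⁻¹) * a ^ (n+1) := by
    have h2 : Real.exp a = ∑' n : ℕ, ((n.factorial : ℝ))⁻¹ * a ^ n := by
      rw [Real.exp_eq_exp_ℝ, exp_eq_tsum ℝ]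
      exact tsum_congr fun n => by rw [smul_eq_mul]
    rw [h2, Summable.tsum_eq_zero_add hc]
    norm_num
  rw [exp_eq_tsum ℝ]
  beta_reduce
  rw [Summable.tsum_eq_zero_add hsum]
  have h1 : ∀ n : ℕ, (((n+1).factorial : ℝ))⁻¹ • (a • p) ^ (n+1)
      = ((((n+1).factorial : ℝ))⁻¹ * a ^ (n+1)) • p := by
    intro n
    rw [smul_pow, hpn, smul_smul]
  simp only [h1, pow_zero, Nat.factorial_zero, Nat.cast_one, inv_one, one_smul]
  rw [Summable.tsum_smul_const hc', hea, add_sub_cancel_left]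

lemma matrix_exp_smul_idem {m : Type*} [Fintype m] [DecidableEq m]
    (p : Matrix m m ℝ) (hp : p * p = p) (a : ℝ) :
    NormedSpace.exp (a • p) = 1 + (Real.exp a - 1) • p := by
  letI : SeminormedRing (Matrix m m ℝ) := Matrix.linftyOpSemiNormedRing
  letI : NormedRing (Matrix m m ℝ) := Matrix.linftyOpNormedRing
  letI : NormedAlgebra ℝ (Matrix m m ℝ) := Matrix.linftyOpNormedAlgebra
  exact exp_smul_idem' p hp a

/-- The block matrix `L` built from `ρ` (with `0 < ρᵀρ < 1`) is the
matrix logarithm of the correlation matrix `C* = [[1, ρᵀ],[ρ, I_r]]`, i.e.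
`exp(L) = C*`. -/
theorem matrixExp_log_corr (r : ℕ) (hr : 1 ≤ r) (ρ : Fin r → ℝ)
    (h0 : 0 < ρ ⬝ᵥ ρ) (h1 : ρ ⬝ᵥ ρ < 1)
    (L : Matrix (Fin 1 ⊕ Fin r) (Fin 1 ⊕ Fin r) ℝ)
    (hL : L = Matrix.fromBlocks
        ((Real.log (1 - ρ ⬝ᵥ ρ) / 2) • (1 : Matrix (Fin 1) (Fin 1) ℝ))
        ((artanh (Real.sqrt (ρ ⬝ᵥ ρ)) / Real.sqrt (ρ ⬝ᵥ ρ)) • Matrix.of fun _ j => ρ j)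
        ((artanh (Real.sqrt (ρ ⬝ᵥ ρ)) / Real.sqrt (ρ ⬝ᵥ ρ)) • Matrix.of fun i _ => ρ i)
        ((Real.log (1 - ρ ⬝ᵥ ρ) / (2 * (ρ ⬝ᵥ ρ))) • Matrix.vecMulVec ρ ρ)) :
    NormedSpace.exp L =
      Matrix.fromBlocks 1 (Matrix.of fun _ j => ρ j) (Matrix.of fun i _ => ρ i) 1 := by
  set s : ℝ := ρ ⬝ᵥ ρ with hs
  have hs0 : s ≠ 0 := ne_of_gt h0
  set t : ℝ := Real.sqrt s with htdef
  have ht0 : 0 < t := Real.sqrt_pos.mpr h0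
  have ht2 : t * t = s := Real.mul_self_sqrt h0.le
  have ht1 : t < 1 := by nlinarith
  have hmt : (0:ℝ) < 1 - t := by linarith
  have hpt : (0:ℝ) < 1 + t := by linarith
  set R : Matrix (Fin 1) (Fin r) ℝ := Matrix.of fun _ j => ρ j with hR
  set Cc : Matrix (Fin r) (Fin 1) ℝ := Matrix.of fun i _ => ρ i with hC
  set V : Matrix (Fin r) (Fin r) ℝ := Matrix.vecMulVec ρ ρ with hV
  -- block products
  have hRC : R * Cc = s • (1 : Matrix (Fin 1) (Fin 1) ℝ) := by
    ext i j
    simp [hR, hC, Matrix.mul_apply, Matrix.one_apply, Subsingleton.elim i j, hs, dotProduct]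
  have hCR : Cc * R = V := by
    ext i j
    simp [hR, hC, hV, Matrix.mul_apply, Matrix.vecMulVec_apply]
  have hVV : V * V = s • V := by
    ext i j
    simp only [hV, Matrix.mul_apply, Matrix.vecMulVec_apply, Matrix.smul_apply, hs,
      dotProduct, smul_eq_mul, Finset.sum_mul]
    exact Finset.sum_congr rfl fun k _ => by ring
  have hRV : R * V = s • R := by
    ext i j
    simp only [hR, hV, Matrix.mul_apply, Matrix.vecMulVec_apply, Matrix.smul_apply, hs,
      dotProduct, smul_eq_mul, Matrix.of_apply]
    rw [Finset.sum_mul]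
    exact Finset.sum_congr rfl fun k _ => by ring
  have hVC : V * Cc = s • Cc := by
    ext i j
    simp only [hC, hV, Matrix.mul_apply, Matrix.vecMulVec_apply, Matrix.smul_apply, hs,
      dotProduct, smul_eq_mul, Matrix.of_apply]
    rw [Finset.sum_mul]
    exact Finset.sum_congr rfl fun k _ => by ring
  -- the two building blocks
  set D : Matrix (Fin 1 ⊕ Fin r) (Fin 1 ⊕ Fin r) ℝ :=
    Matrix.fromBlocks 1 0 0 (s⁻¹ • V) with hD
  set Am : Matrix (Fin 1 ⊕ Fin r) (Fin 1 ⊕ Fin r) ℝ :=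
    Matrix.fromBlocks 0 R Cc 0 with hAm
  have hsVV : (s⁻¹ • V) * (s⁻¹ • V) = s⁻¹ • V := by
    rw [smul_mul_assoc, mul_smul_comm, hVV, smul_smul, smul_smul]
    congr 1
    field_simp
  have hDD : D * D = D := by
    rw [hD, Matrix.fromBlocks_multiply]
    simp [hsVV]
  have hAA : Am * Am = (t * t) • D := by
    rw [hAm, hD, Matrix.fromBlocks_multiply, Matrix.fromBlocks_smul, ht2]
    simp [hRC, hCR, smul_smul, mul_inv_cancel₀ hs0]
  have hDA : D * Am = Am := by
    rw [hD, hAm, Matrix.fromBlocks_multiply]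
    simp [smul_mul_assoc, hVC, smul_smul, inv_mul_cancel₀ hs0]
  have hAD : Am * D = Am := by
    rw [hD, hAm, Matrix.fromBlocks_multiply]
    simp [mul_smul_comm, hRV, smul_smul, inv_mul_cancel₀ hs0]
  have key : ∀ e f : ℝ, (D + e • Am) * (D + f • Am) = (1 + e*f*(t*t)) • D + (e+f) • Am := by
    intro e f
    simp only [add_mul, mul_add, smul_mul_assoc, mul_smul_comm, hDD, hAA, hDA, hAD, smul_smul]
    module
  set Pp : Matrix (Fin 1 ⊕ Fin r) (Fin 1 ⊕ Fin r) ℝ := (2⁻¹:ℝ) • (D + t⁻¹ • Am) with hPpdef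
  set Pm : Matrix (Fin 1 ⊕ Fin r) (Fin 1 ⊕ Fin r) ℝ := (2⁻¹:ℝ) • (D + (-t⁻¹) • Am) with hPmdef
  have hPp : Pp * Pp = Pp := by
    rw [hPpdef, smul_mul_assoc, mul_smul_comm, key]
    match_scalars <;> (field_simp; try ring)
  have hPm : Pm * Pm = Pm := by
    rw [hPmdef, smul_mul_assoc, mul_smul_comm, key]
    match_scalars <;> (field_simp; try ring)
  have hPpPm : Pp * Pm = 0 := by
    rw [hPpdef, hPmdef, smul_mul_assoc, mul_smul_comm, key]
    match_scalars <;> (field_simp; try ring)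
  have hPmPp : Pm * Pp = 0 := by
    rw [hPmdef, hPpdef, smul_mul_assoc, mul_smul_comm, key]
    match_scalars <;> (field_simp; try ring)
  set a : ℝ := Real.log (1 - s) / 2 with ha
  set θ : ℝ := artanh t with hθ
  have h1s : 1 - s = (1 - t) * (1 + t) := by rw [← ht2]; ring
  have ha' : a = (Real.log (1 - t) + Real.log (1 + t)) / 2 := by
    rw [ha, h1s, Real.log_mul hmt.ne' hpt.ne']
  have hθ' : θ = (Real.log (1 + t) - Real.log (1 - t)) / 2 := by
    rw [hθ]; unfold artanh; rw [Real.log_div hpt.ne' hmt.ne']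
  have hap : a + θ = Real.log (1 + t) := by rw [ha', hθ']; ring
  have ham : a - θ = Real.log (1 - t) := by rw [ha', hθ']; ring
  have eα : Real.exp (a + θ) = 1 + t := by rw [hap, Real.exp_log hpt]
  have eβ : Real.exp (a - θ) = 1 - t := by rw [ham, Real.exp_log hmt]
  -- decompose L
  have hLdec : L = a • D + (θ * t⁻¹) • Am := by
    rw [hL, hD, hAm, Matrix.fromBlocks_smul, Matrix.fromBlocks_smul, Matrix.fromBlocks_add,
      Matrix.fromBlocks_inj]
    refine ⟨by simp, ?_, ?_, ?_⟩
    · rw [smul_zero, zero_add, div_eq_mul_inv]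
    · rw [smul_zero, zero_add, div_eq_mul_inv]
    · rw [smul_zero, add_zero, smul_smul]
      congr 1
      rw [ha]
      field_simp
      try ring
  have hLPP : L = (a + θ) • Pp + (a - θ) • Pm := by
    rw [hLdec, hPpdef, hPmdef]
    module
  have hcomm : Commute ((a + θ) • Pp) ((a - θ) • Pm) := by
    show _ = _
    rw [smul_mul_assoc, mul_smul_comm, hPpPm, smul_mul_assoc, mul_smul_comm, hPmPp]
    simp
  rw [hLPP, Matrix.exp_add_of_commute _ _ hcomm,
    matrix_exp_smul_idem Pp hPp, matrix_exp_smul_idem Pm hPm, eα, eβ]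
  have hsc1 : (1 + t - 1 : ℝ) = t := by ring
  have hsc2 : (1 - t - 1 : ℝ) = -t := by ring
  rw [hsc1, hsc2]
  have hRHS : Matrix.fromBlocks (1 : Matrix (Fin 1) (Fin 1) ℝ) R Cc (1 : Matrix (Fin r) (Fin r) ℝ)
      = 1 + Am := by
    rw [hAm, ← Matrix.fromBlocks_one, Matrix.fromBlocks_add]
    simp
  rw [hRHS]
  have expand : (1 + t • Pp) * (1 + (-t) • Pm)
      = 1 + t • Pp + (-t) • Pm + (t * (-t)) • (Pp * Pm) := by
    simp only [mul_add, add_mul, mul_one, one_mul, smul_mul_assoc, mul_smul_comm, smul_smul]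
    module
  rw [expand, hPpPm, smul_zero, add_zero, hPpdef, hPmdef]
  match_scalars <;> (field_simp; try ring)
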